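/- Let Γ be a simple graph on a vertex type V. Let ϕ : V × V → ℝ be a function with finite support such that ϕ (u,v) = 0 whenever u and v are not adjacent in Γ, ϕ (v,u) = −ϕ (u,v) for all u, v, and for every vertex u the (finitely supported) sum over v of ϕ (u,v) is 0. Then there exist finitely many closed walks p₁, …, p_k in Γ and nonnegative real numbers λ₁, …, λ_k such that ϕ = λ₁·flow(p₁) + ⋯ + λ_k·flow(p_k) and, moreover, (1/2)·Σ_{(u,v)} |ϕ (u,v)| = λ₁·length(p₁) + ⋯ + λ_k·length(p_k) (i.e. no cancellation occurs in the decomposition). -/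

import Mathlib

open scoped BigOperators
open Function

/-- The flow of a closed walk `p`: it assigns to `(u, v)` the number of darts of `p`
going from `u` to `v` minus the number of darts of `p` going from `v` to `u`. -/
def walkFlow {V : Type*} [DecidableEq V] {Γ : SimpleGraph V} {x : V}
    (p : Γ.Walk x x) : V × V → ℝ := fun uv =>
  ((p.darts.filter (fun d => d.toProd = uv)).length : ℝ) -
    ((p.darts.filter (fun d => d.toProd = (uv.2, uv.1))).length : ℝ)

section aux
variable {V : Type*} [DecidableEq V]

/-- Occurrence count, phrased via `countP` to avoid `BEq` diamond issues. -/
def cnt {α : Type*} [DecidableEq α] (x : α) (l : List α) : ℕ :=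
  l.countP (fun y => y = x)

lemma cnt_nil {α : Type*} [DecidableEq α] (x : α) : cnt x ([] : List α) = 0 := rfl

lemma cnt_cons {α : Type*} [DecidableEq α] (x a : α) (l : List α) :
    cnt x (a :: l) = cnt x l + if a = x then 1 else 0 := by
  simp only [cnt, List.countP_cons]
  by_cases h : a = x <;> simp [h]

lemma cnt_eq_zero {α : Type*} [DecidableEq α] {x : α} {l : List α} (h : x ∉ l) :
    cnt x l = 0 := by
  induction l with
  | nil => rfl
  | cons a l ih =>
    rw [cnt_cons, ih (fun hc => h (List.mem_cons_of_mem _ hc)),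
      if_neg (fun hc => h (by rw [← hc]; exact List.mem_cons_self))]

lemma cnt_eq_one {α : Type*} [DecidableEq α] {x : α} {l : List α} (hnd : l.Nodup)
    (h : x ∈ l) : cnt x l = 1 := by
  induction l with
  | nil => simp at h
  | cons a l ih =>
    rw [cnt_cons]
    rcases List.mem_cons.mp h with rfl | hm
    · rw [if_pos rfl, cnt_eq_zero (List.Nodup.notMem hnd)]
    · rw [ih (List.Nodup.of_cons hnd) hm,
        if_neg (fun hc => (List.Nodup.notMem hnd) (by rw [hc]; exact hm))]

lemma sum_cnt_mem {α : Type*} [DecidableEq α] (T : Finset α) (L : List α)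
    (hL : ∀ x ∈ L, x ∈ T) : ∑ x ∈ T, cnt x L = L.length := by
  induction L with
  | nil => simp [cnt_nil]
  | cons a L ih =>
    simp only [cnt_cons, List.length_cons, Finset.sum_add_distrib]
    rw [ih (fun x hx => hL x (List.mem_cons_of_mem _ hx))]
    have : ∑ x ∈ T, (if a = x then 1 else 0) = 1 := by
      rw [Finset.sum_ite_eq T a (fun _ => 1), if_pos (hL a (List.mem_cons_self))]
    omega

lemma sum_cnt_fst (T : Finset V) (u : V) (L : List (V × V))
    (hL : ∀ x ∈ L, x.2 ∈ T) :
    ∑ v ∈ T, cnt (u, v) L = L.countP (fun x => x.1 = u) := by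
  induction L with
  | nil => simp [cnt_nil]
  | cons a L ih =>
    simp only [cnt_cons, List.countP_cons, Finset.sum_add_distrib]
    rw [ih (fun x hx => hL x (List.mem_cons_of_mem _ hx))]
    congr 1
    have ha2 : a.2 ∈ T := hL a (List.mem_cons_self)
    by_cases h1 : a.1 = u
    · simp only [h1, decide_true, if_true]
      rw [Finset.sum_congr rfl (g := fun v => if a.2 = v then 1 else 0)]
      · rw [Finset.sum_ite_eq T a.2 (fun _ => 1), if_pos ha2]
      · intro v _
        by_cases h : a.2 = v <;> simp [Prod.ext_iff, h, h1]
    · simp only [h1, decide_false, if_false]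
      apply Finset.sum_eq_zero
      intro v _
      simp only [Prod.ext_iff, ite_eq_right_iff, and_imp]
      intro h _; exact absurd h h1

lemma sum_cnt_snd (T : Finset V) (u : V) (L : List (V × V))
    (hL : ∀ x ∈ L, x.1 ∈ T) :
    ∑ v ∈ T, cnt (v, u) L = L.countP (fun x => x.2 = u) := by
  induction L with
  | nil => simp [cnt_nil]
  | cons a L ih =>
    simp only [cnt_cons, List.countP_cons, Finset.sum_add_distrib]
    rw [ih (fun x hx => hL x (List.mem_cons_of_mem _ hx))]
    congr 1
    have ha1 : a.1 ∈ T := hL a (List.mem_cons_self)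
    by_cases h2 : a.2 = u
    · simp only [h2, decide_true, if_true]
      rw [Finset.sum_congr rfl (g := fun v => if a.1 = v then 1 else 0)]
      · rw [Finset.sum_ite_eq T a.1 (fun _ => 1), if_pos ha1]
      · intro v _
        by_cases h : a.1 = v <;> simp [Prod.ext_iff, h, h2]
    · simp only [h2, decide_false, if_false]
      apply Finset.sum_eq_zero
      intro v _
      simp only [Prod.ext_iff, ite_eq_right_iff, and_imp]
      intro _ h; exact absurd h h2
end aux

section aux2
variable {V : Type*} [DecidableEq V] {Γ : SimpleGraph V}

lemma filter_darts_eq (l : List Γ.Dart) (uv : V × V) :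
    (l.filter (fun d => d.toProd = uv)).length = cnt uv (l.map SimpleGraph.Dart.toProd) := by
  induction l with
  | nil => rfl
  | cons d l ih =>
    simp only [List.map_cons, cnt_cons]
    by_cases h : d.toProd = uv
    · simp [List.filter_cons, h, ih]
    · simp [List.filter_cons, h, ih]

lemma walkFlow_eq {x : V} (p : Γ.Walk x x) (uv : V × V) :
    walkFlow p uv = (cnt uv (p.darts.map SimpleGraph.Dart.toProd) : ℝ)
      - (cnt (uv.2, uv.1) (p.darts.map SimpleGraph.Dart.toProd) : ℝ) := by
  rw [walkFlow, filter_darts_eq, filter_darts_eq]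

lemma countP_walk {a b : V} (p : Γ.Walk a b) (u : V) :
    (((p.darts.map SimpleGraph.Dart.toProd).countP (fun x => x.1 = u) : ℕ) : ℝ)
      - (((p.darts.map SimpleGraph.Dart.toProd).countP (fun x => x.2 = u) : ℕ) : ℝ)
    = (if a = u then 1 else 0) - (if b = u then 1 else 0) := by
  induction p with
  | nil => simp
  | @cons a c b h q ih =>
    simp only [SimpleGraph.Walk.darts_cons, List.map_cons, List.countP_cons]
    push_cast
    by_cases h1 : a = u <;> by_cases h2 : c = u <;>
      simp only [h1, h2, decide_eq_true_eq, if_true, if_false] <;>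
      · simp only [h1, h2, decide_true, decide_false, if_true, if_false,
          Nat.cast_add, Nat.cast_one, Nat.cast_zero] at *
        push_cast
        linarith [ih]

-- walk along a sequence
def seqWalk (Γ : SimpleGraph V) (f : ℕ → V) (h : ∀ t, Γ.Adj (f t) (f (t+1))) :
    ∀ (a n : ℕ), Γ.Walk (f a) (f (a+n))
  | a, 0 => SimpleGraph.Walk.nil
  | a, n+1 =>
    (SimpleGraph.Walk.cons (h a)
      ((seqWalk Γ f h (a+1) n).copy rfl (by congr 1; omega)))

lemma seqWalk_darts (f : ℕ → V) (h : ∀ t, Γ.Adj (f t) (f (t+1))) :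
    ∀ (n a : ℕ), ((seqWalk Γ f h a n).darts.map SimpleGraph.Dart.toProd)
      = (List.range n).map (fun t => (f (a+t), f (a+t+1)))
  | 0, a => by simp [seqWalk]
  | n+1, a => by
    rw [List.range_succ_eq_map]
    simp only [seqWalk, SimpleGraph.Walk.darts_cons, SimpleGraph.Walk.darts_copy,
      List.map_cons, seqWalk_darts f h n (a+1), List.map_map]
    have h0 : (f (a+0), f (a+0+1)) = (f a, f (a+1)) := by norm_num
    rw [h0]
    congr 1
    apply List.map_congr_left
    intro t ht
    simp only [Function.comp_apply, Prod.mk.injEq]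
    refine ⟨by congr 1; omega, by congr 1; omega⟩

lemma seqWalk_length (f : ℕ → V) (h : ∀ t, Γ.Adj (f t) (f (t+1))) (a n : ℕ) :
    (seqWalk Γ f h a n).length = n := by
  have := seqWalk_darts f h n a
  have h2 := congrArg List.length this
  simpa [SimpleGraph.Walk.length_darts] using h2

lemma half_l1 (ϕ : V × V → ℝ) (hfin : (Function.support ϕ).Finite)
    (hskew : ∀ u v : V, ϕ (v, u) = -ϕ (u, v))
    (P : Finset (V × V)) (hP : ∀ uv, uv ∈ P ↔ 0 < ϕ uv) :
    ∑ᶠ uv : V × V, |ϕ uv| = 2 * ∑ uv ∈ P, ϕ uv := by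
  have hswap : ∀ uv : V × V, ϕ (uv.2, uv.1) = -ϕ uv := by
    intro uv; rw [hskew]
  have hsub : Function.support (fun uv : V × V => |ϕ uv|) ⊆ ↑(P ∪ P.image Prod.swap) := by
    intro uv huv
    simp only [Function.mem_support, abs_ne_zero] at huv
    rcases lt_or_gt_of_ne huv with hneg | hpos
    · have : 0 < ϕ (Prod.swap uv) := by
        rw [show (Prod.swap uv) = (uv.2, uv.1) from rfl, hswap]; linarith
      simp only [Finset.coe_union, Set.mem_union, Finset.coe_image, Set.mem_image]
      right
      exact ⟨Prod.swap uv, by simpa [hP] using this, Prod.swap_swap uv⟩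
    · simp only [Finset.coe_union, Set.mem_union]
      left; exact_mod_cast (hP uv).mpr hpos
  rw [finsum_eq_finset_sum_of_support_subset _ hsub]
  have hdisj : Disjoint P (P.image Prod.swap) := by
    rw [Finset.disjoint_left]
    intro uv h1 h2
    simp only [Finset.mem_image] at h2
    obtain ⟨ab, hab, hswab⟩ := h2
    have h1' := (hP uv).mp h1
    have h2' := (hP ab).mp hab
    rw [← hswab] at h1'
    have : ϕ (Prod.swap ab) = -ϕ ab := hswap ab
    linarith [this ▸ h1']
  rw [Finset.sum_union hdisj]
  rw [Finset.sum_image (by intro x _ y _ hxy; exact Prod.swap_injective hxy)]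
  have e1 : ∑ uv ∈ P, |ϕ uv| = ∑ uv ∈ P, ϕ uv :=
    Finset.sum_congr rfl (fun uv huv => abs_of_pos ((hP uv).mp huv))
  have e2 : ∑ uv ∈ P, |ϕ (Prod.swap uv)| = ∑ uv ∈ P, ϕ uv :=
    Finset.sum_congr rfl (fun uv huv => by
      rw [show Prod.swap uv = (uv.2, uv.1) from rfl, hswap, abs_neg,
        abs_of_pos ((hP uv).mp huv)])
  rw [e1, e2]; ring
end aux2



set_option maxHeartbeats 1000000 in
private lemma key_cycle_decomp {V : Type*} [DecidableEq V] (Γ : SimpleGraph V) :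
    ∀ (n : ℕ) (ϕ : V × V → ℝ), {uv : V × V | 0 < ϕ uv}.ncard = n →
    (Function.support ϕ).Finite →
    (∀ u v : V, ¬ Γ.Adj u v → ϕ (u, v) = 0) →
    (∀ u v : V, ϕ (v, u) = -ϕ (u, v)) →
    (∀ u : V, ∑ᶠ v : V, ϕ (u, v) = 0) →
    ∃ (k : ℕ) (x : Fin k → V) (p : ∀ i : Fin k, Γ.Walk (x i) (x i)) (lam : Fin k → ℝ),
      (∀ i : Fin k, 0 ≤ lam i) ∧
      (∀ uv : V × V, ϕ uv = ∑ i : Fin k, lam i * walkFlow (p i) uv) ∧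
      (1 / 2) * ∑ᶠ uv : V × V, |ϕ uv| = ∑ i : Fin k, lam i * ((p i).length : ℝ) := by
  intro n
  induction n using Nat.strong_induction_on with
  | _ n IH =>
  intro ϕ hn hfin hadj hskew hdiv
  by_cases hex : ∃ uv : V × V, 0 < ϕ uv
  case neg =>
    push_neg at hex
    have hzero : ∀ uv : V × V, ϕ uv = 0 := by
      intro uv
      have h1 := hex uv
      have h2 := hex (uv.2, uv.1)
      have h3 := hskew uv.1 uv.2
      simp only [Prod.mk.eta] at h3
      linarith
    refine ⟨0, Fin.elim0, fun i => i.elim0, Fin.elim0, fun i => i.elim0, ?_, ?_⟩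
    · intro uv; simp [hzero]
    · simp [hzero]
  case pos =>
  obtain ⟨ab, hab⟩ := hex
  -- every vertex with positive in-flow has positive out-flow
  have hpos_out : ∀ u : V, (∃ w, 0 < ϕ (w, u)) → ∃ v, 0 < ϕ (u, v) := by
    rintro u ⟨w, hw⟩
    by_contra hno
    push_neg at hno
    have hinj : Function.Injective (fun v : V => ((u, v) : V × V)) := by
      intro a b hab2; exact (Prod.ext_iff.mp hab2).2
    have hsupfin : (Function.support (fun v => ϕ (u, v))).Finite := by
      have hss : Function.support (fun v => ϕ (u, v)) ⊆
          (fun v : V => ((u, v) : V × V)) ⁻¹' (Function.support ϕ) := fun v hv => hv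
      exact Set.Finite.subset (hfin.preimage hinj.injOn) hss
    have hw' : ϕ (u, w) < 0 := by
      have := hskew w u
      linarith
    have hmem : w ∈ hsupfin.toFinset := by
      simp only [Set.Finite.mem_toFinset, Function.mem_support]
      exact ne_of_lt hw'
    have hlt : ∑ v ∈ hsupfin.toFinset, ϕ (u, v) < 0 := by
      have := Finset.sum_lt_sum (f := fun v => ϕ (u, v)) (g := fun _ => (0 : ℝ))
        (s := hsupfin.toFinset) (fun i _ => hno i) ⟨w, hmem, hw'⟩
      simpa using this
    have heq : ∑ᶠ v, ϕ (u, v) = ∑ v ∈ hsupfin.toFinset, ϕ (u, v) :=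
      finsum_eq_finset_sum_of_support_subset _ (by simp)
    rw [hdiv u] at heq
    linarith
  -- successor function
  let nxt : V → V := fun u =>
    @dite _ (∃ v, 0 < ϕ (u, v)) (Classical.dec _) (fun h => h.choose) (fun _ => u)
  have hnxt : ∀ u : V, (∃ v, 0 < ϕ (u, v)) → 0 < ϕ (u, nxt u) := by
    intro u h
    simp only [nxt]
    rw [dif_pos h]
    exact h.choose_spec
  let f : ℕ → V := fun n => nxt^[n] ab.2
  have hf_succ : ∀ t, f (t + 1) = nxt (f t) := by
    intro t; simp only [f, Function.iterate_succ_apply']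
  have hin : ∀ t : ℕ, ∃ w, 0 < ϕ (w, f t) := by
    intro t
    induction t with
    | zero => exact ⟨ab.1, by simpa [f] using hab⟩
    | succ t ih =>
      have h1 := hnxt (f t) (hpos_out (f t) ih)
      rw [← hf_succ t] at h1
      exact ⟨f t, h1⟩
  have hstep : ∀ t : ℕ, 0 < ϕ (f t, f (t + 1)) := by
    intro t
    have h1 := hnxt (f t) (hpos_out (f t) (hin t))
    rwa [← hf_succ t] at h1
  have hadjf : ∀ t, Γ.Adj (f t) (f (t + 1)) := by
    intro t
    by_contra hc
    exact (hstep t).ne' (hadj _ _ hc)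
  -- repetition
  have himg : ∀ t, f t ∈ (hfin.image Prod.fst).toFinset := by
    intro t
    simp only [Set.Finite.mem_toFinset, Set.mem_image]
    exact ⟨(f t, f (t + 1)), (hstep t).ne', rfl⟩
  obtain ⟨s, t, hst, hfe⟩ := Finite.exists_ne_map_eq_of_infinite
    (fun t : ℕ => (⟨f t, himg t⟩ : {y // y ∈ (hfin.image Prod.fst).toFinset}))
  have hfe' : f s = f t := by simpa [Subtype.ext_iff] using hfe
  have hPex : ∃ nn : ℕ, ∃ mm, mm < nn ∧ f mm = f nn := by
    rcases lt_or_gt_of_ne hst with h | h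
    · exact ⟨t, s, h, hfe'⟩
    · exact ⟨s, t, h, hfe'.symm⟩
  haveI : DecidablePred (fun nn : ℕ => ∃ mm, mm < nn ∧ f mm = f nn) :=
    fun _ => Classical.dec _
  set j := Nat.find hPex with hj
  obtain ⟨i, hijlt, hfij⟩ := Nat.find_spec hPex
  have hminrep : ∀ s t : ℕ, s < t → t < j → f s ≠ f t := by
    intro s t h1 h2 hc
    exact Nat.find_min hPex h2 ⟨s, h1, hc⟩
  set m := j - i with hm
  have hm1 : 1 ≤ m := by omega
  have hij' : i + m = j := by omega
  -- the closed walk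
  let p₀ : Γ.Walk (f i) (f i) :=
    (seqWalk Γ f hadjf i m).copy rfl (by rw [hij']; exact hfij.symm)
  set L : List (V × V) := p₀.darts.map SimpleGraph.Dart.toProd with hLdef
  have hLeq : L = (List.range m).map (fun t => (f (i + t), f (i + t + 1))) := by
    simp only [hLdef, p₀, SimpleGraph.Walk.darts_copy]
    exact seqWalk_darts f hadjf m i
  have hp₀len : ((p₀.length : ℕ) : ℝ) = (m : ℝ) := by
    simp [p₀, SimpleGraph.Walk.length_copy, seqWalk_length]
  have hLmem : ∀ x ∈ L, ∃ t, t < m ∧ x = (f (i + t), f (i + t + 1)) := by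
    intro x hx
    rw [hLeq] at hx
    simp only [List.mem_map, List.mem_range] at hx
    obtain ⟨t, ht, hxe⟩ := hx
    exact ⟨t, ht, hxe.symm⟩
  have hLpos : ∀ x ∈ L, 0 < ϕ x := by
    intro x hx
    obtain ⟨t, _, rfl⟩ := hLmem x hx
    exact hstep (i + t)
  have hLnd : L.Nodup := by
    rw [hLeq]
    apply List.Nodup.map_on ?_ List.nodup_range
    intro s hs t ht he
    simp only [List.mem_range] at hs ht
    simp only [Prod.mk.injEq] at he
    by_contra hne
    rcases Nat.lt_or_ge s t with h | h
    · exact hminrep (i + s) (i + t) (by omega) (by omega) he.1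
    · exact hminrep (i + t) (i + s) (by omega) (by omega) he.1.symm
  have hLlen : L.length = m := by rw [hLeq]; simp
  have hLne : L ≠ [] := by
    intro h
    rw [h] at hLlen
    simp at hLlen
    omega
  -- minimum value of ϕ on L
  have hLfne : L.toFinset.Nonempty := by
    rcases L with _ | ⟨a, L'⟩
    · exact absurd rfl hLne
    · exact ⟨a, by simp⟩
  have hImne : (L.toFinset.image ϕ).Nonempty := hLfne.image ϕ
  set lam := (L.toFinset.image ϕ).min' hImne with hlamdef
  obtain ⟨x₀, hx₀L, hx₀⟩ : ∃ x ∈ L, ϕ x = lam := by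
    have hmm := Finset.min'_mem (L.toFinset.image ϕ) hImne
    simp only [Finset.mem_image, List.mem_toFinset] at hmm
    obtain ⟨x, hx, he⟩ := hmm
    exact ⟨x, hx, he⟩
  have hlam_le : ∀ x ∈ L, lam ≤ ϕ x := by
    intro x hx
    exact Finset.min'_le _ _ (Finset.mem_image_of_mem ϕ (List.mem_toFinset.mpr hx))
  have hlam_pos : 0 < lam := hx₀ ▸ hLpos x₀ hx₀L
  -- no reversed darts
  have hnorev : ∀ uv : V × V, uv ∈ L → (uv.2, uv.1) ∉ L := by
    intro uv h1 h2
    have ha := hLpos _ h1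
    have hb := hLpos _ h2
    have hc := hskew uv.1 uv.2
    simp only [Prod.mk.eta] at hc
    linarith
  -- flow of p₀ via counts
  have hflow : ∀ uv : V × V, walkFlow p₀ uv
      = ((cnt uv L : ℝ) - (cnt (uv.2, uv.1) L : ℝ)) := by
    intro uv; rw [walkFlow_eq, ← hLdef]
  have hcount : ∀ uv : V × V, ((cnt uv L : ℕ) : ℝ) = if uv ∈ L then 1 else 0 := by
    intro uv
    by_cases h : uv ∈ L
    · rw [if_pos h, cnt_eq_one hLnd h]; norm_num
    · rw [if_neg h, cnt_eq_zero h]; norm_num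
  have hflow' : ∀ uv : V × V, walkFlow p₀ uv
      = (if uv ∈ L then 1 else 0) - (if (uv.2, uv.1) ∈ L then 1 else 0) := by
    intro uv; rw [hflow, hcount, hcount]
  -- the reduced cycle ψ
  set ψ : V × V → ℝ := fun uv => ϕ uv - lam * walkFlow p₀ uv with hψdef
  have hψL : ∀ uv ∈ L, ψ uv = ϕ uv - lam := by
    intro uv h
    simp only [hψdef, hflow' uv, if_pos h, if_neg (hnorev uv h)]
    ring
  have hψR : ∀ uv : V × V, (uv.2, uv.1) ∈ L → ψ uv = ϕ uv + lam := by
    intro uv h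
    have huv : uv ∉ L := by
      have := hnorev (uv.2, uv.1) h
      simpa using this
    simp only [hψdef, hflow' uv, if_pos h, if_neg huv]
    ring
  have hψN : ∀ uv : V × V, uv ∉ L → (uv.2, uv.1) ∉ L → ψ uv = ϕ uv := by
    intro uv h1 h2
    simp only [hψdef, hflow' uv, if_neg h1, if_neg h2]
    ring
  have hLadj : ∀ x ∈ L, Γ.Adj x.1 x.2 := by
    intro x hx
    by_contra hc
    have := hadj x.1 x.2 hc
    simp only [Prod.mk.eta] at this
    exact (hLpos x hx).ne' this
  -- hypotheses for ψ
  have hrevset : {uv : V × V | (uv.2, uv.1) ∈ L}.Finite := by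
    have hss : {uv : V × V | (uv.2, uv.1) ∈ L} ⊆ Prod.swap '' {x : V × V | x ∈ L} := by
      intro uv h
      exact ⟨(uv.2, uv.1), h, by simp⟩
    exact Set.Finite.subset ((L.finite_toSet).image _) hss
  have hfinψ : (Function.support ψ).Finite := by
    apply Set.Finite.subset ((hfin.union (L.finite_toSet)).union hrevset)
    intro uv huv
    simp only [Function.mem_support] at huv
    by_cases h1 : uv ∈ L
    · exact Or.inl (Or.inr h1)
    · by_cases h2 : (uv.2, uv.1) ∈ L
      · exact Or.inr h2
      · left; left
        simp only [Function.mem_support]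
        intro hc
        apply huv
        rw [hψN uv h1 h2, hc]
  have hadjψ : ∀ u v : V, ¬ Γ.Adj u v → ψ (u, v) = 0 := by
    intro u v huv
    have h1 : (u, v) ∈ L → False := fun hc => huv (hLadj _ hc)
    have h2 : (v, u) ∈ L → False := fun hc => huv (Γ.adj_symm (hLadj _ hc))
    rw [hψN (u, v) h1 h2]
    exact hadj u v huv
  have hskewψ : ∀ u v : V, ψ (v, u) = -ψ (u, v) := by
    intro u v
    have hwf : walkFlow p₀ (v, u) = -walkFlow p₀ (u, v) := by
      simp only [walkFlow]; ring
    simp only [hψdef, hwf, hskew u v]; ring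
  have hdivψ : ∀ u : V, ∑ᶠ v : V, ψ (u, v) = 0 := by
    intro u
    set T : Finset V :=
      ((hfin.image Prod.snd).toFinset ∪ (L.map Prod.snd).toFinset)
        ∪ (L.map Prod.fst).toFinset with hT
    have hTsnd : ∀ x ∈ L, x.2 ∈ T := by
      intro x hx
      simp only [hT, Finset.mem_union, List.mem_toFinset, List.mem_map]
      exact Or.inl (Or.inr ⟨x, hx, rfl⟩)
    have hTfst : ∀ x ∈ L, x.1 ∈ T := by
      intro x hx
      simp only [hT, Finset.mem_union, List.mem_toFinset, List.mem_map]
      exact Or.inr ⟨x, hx, rfl⟩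
    have hTϕ : Function.support (fun v => ϕ (u, v)) ⊆ ↑T := by
      intro v hv
      simp only [Function.mem_support] at hv
      simp only [hT, Finset.coe_union, Set.mem_union, Finset.mem_coe,
        Set.Finite.mem_toFinset, Set.mem_image]
      exact Or.inl (Or.inl ⟨(u, v), hv, rfl⟩)
    have hsupp : Function.support (fun v => ψ (u, v)) ⊆ ↑T := by
      intro v hv
      simp only [Function.mem_support] at hv
      by_cases h1 : (u, v) ∈ L
      · have := hTsnd _ h1
        simpa using this
      · by_cases h2 : (v, u) ∈ L
        · have := hTfst _ h2
          simpa using this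
        · apply hTϕ
          simp only [Function.mem_support]
          intro hc
          apply hv
          rw [hψN (u, v) h1 h2, hc]
    rw [finsum_eq_finset_sum_of_support_subset _ hsupp]
    have e0 : ∑ v ∈ T, ψ (u, v)
        = ∑ v ∈ T, ϕ (u, v) - lam * ∑ v ∈ T, walkFlow p₀ (u, v) := by
      rw [Finset.mul_sum, ← Finset.sum_sub_distrib]
    have e1 : ∑ v ∈ T, ϕ (u, v) = 0 := by
      rw [← finsum_eq_finset_sum_of_support_subset _ hTϕ, hdiv u]
    have e2 : ∑ v ∈ T, walkFlow p₀ (u, v) = 0 := by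
      have eA : ∑ v ∈ T, ((cnt (u, v) L : ℕ) : ℝ)
          = ((L.countP (fun x => x.1 = u) : ℕ) : ℝ) := by
        rw_mod_cast [sum_cnt_fst T u L hTsnd]
      have eB : ∑ v ∈ T, ((cnt (v, u) L : ℕ) : ℝ)
          = ((L.countP (fun x => x.2 = u) : ℕ) : ℝ) := by
        rw_mod_cast [sum_cnt_snd T u L hTfst]
      have hcw := countP_walk p₀ u
      rw [← hLdef] at hcw
      calc ∑ v ∈ T, walkFlow p₀ (u, v)
          = ∑ v ∈ T, (((cnt (u, v) L : ℕ) : ℝ) - ((cnt (v, u) L : ℕ) : ℝ)) :=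
            Finset.sum_congr rfl (fun v _ => hflow (u, v))
        _ = ∑ v ∈ T, ((cnt (u, v) L : ℕ) : ℝ) - ∑ v ∈ T, ((cnt (v, u) L : ℕ) : ℝ) :=
            Finset.sum_sub_distrib _ _
        _ = ((L.countP (fun x => x.1 = u) : ℕ) : ℝ)
              - ((L.countP (fun x => x.2 = u) : ℕ) : ℝ) := by rw [eA, eB]
        _ = 0 := by rw [hcw]; ring
    rw [e0, e1, e2]; ring
  -- positive parts
  have hposϕ_fin : {uv : V × V | 0 < ϕ uv}.Finite :=
    hfin.subset (fun uv h => ne_of_gt h)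
  have hposψ_fin : {uv : V × V | 0 < ψ uv}.Finite :=
    hfinψ.subset (fun uv h => ne_of_gt h)
  set Pϕ := hposϕ_fin.toFinset with hPϕdef
  set Pψ := hposψ_fin.toFinset with hPψdef
  have hPϕmem : ∀ uv : V × V, uv ∈ Pϕ ↔ 0 < ϕ uv := by
    intro uv; simp [hPϕdef, Set.Finite.mem_toFinset]
  have hPψmem : ∀ uv : V × V, uv ∈ Pψ ↔ 0 < ψ uv := by
    intro uv; simp [hPψdef, Set.Finite.mem_toFinset]
  have hsub : ∀ uv : V × V, 0 < ψ uv → 0 < ϕ uv := by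
    intro uv h
    by_cases h1 : uv ∈ L
    · exact hLpos uv h1
    · by_cases h2 : (uv.2, uv.1) ∈ L
      · exfalso
        have he := hψR uv h2
        have hneg : ϕ uv = -ϕ (uv.2, uv.1) := by
          have := hskew uv.1 uv.2
          simp only [Prod.mk.eta] at this
          linarith
        have hle := hlam_le _ h2
        rw [he, hneg] at h
        linarith
      · rwa [hψN uv h1 h2] at h
  have hstrict : {uv : V × V | 0 < ψ uv} ⊂ {uv : V × V | 0 < ϕ uv} := by
    refine (Set.ssubset_iff_of_subset (fun uv h => hsub uv h)).mpr
      ⟨x₀, hLpos x₀ hx₀L, ?_⟩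
    intro hc
    have hc' : 0 < ψ x₀ := hc
    rw [hψL x₀ hx₀L, hx₀] at hc'
    simp at hc'
  have hlt : {uv : V × V | 0 < ψ uv}.ncard < n := by
    rw [← hn]
    exact Set.ncard_lt_ncard hstrict hposϕ_fin
  obtain ⟨k, x, p, lam', hlam'0, hrep, hnorm⟩ :=
    IH _ hlt ψ rfl hfinψ hadjψ hskewψ hdivψ
  -- norm bookkeeping
  have hhalfϕ : ∑ᶠ uv : V × V, |ϕ uv| = 2 * ∑ uv ∈ Pϕ, ϕ uv :=
    half_l1 ϕ hfin hskew Pϕ hPϕmem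
  have hhalfψ : ∑ᶠ uv : V × V, |ψ uv| = 2 * ∑ uv ∈ Pψ, ψ uv :=
    half_l1 ψ hfinψ hskewψ Pψ hPψmem
  have hPsub : Pψ ⊆ Pϕ := fun uv h => (hPϕmem uv).mpr (hsub uv ((hPψmem uv).mp h))
  have hzero_out : ∀ uv ∈ Pϕ, uv ∉ Pψ → ψ uv = 0 := by
    intro uv h1 h2
    have hϕp := (hPϕmem uv).mp h1
    have hψle : ψ uv ≤ 0 := le_of_not_gt (fun hc => h2 ((hPψmem uv).mpr hc))
    by_cases hl : uv ∈ L
    · have e := hψL uv hl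
      have hle := hlam_le uv hl
      linarith
    · by_cases h2' : (uv.2, uv.1) ∈ L
      · exfalso
        have hp := hLpos _ h2'
        have := hskew uv.1 uv.2
        simp only [Prod.mk.eta] at this
        linarith
      · exfalso
        rw [hψN uv hl h2'] at hψle
        linarith
  have hsum_eq : ∑ uv ∈ Pϕ, ψ uv = ∑ uv ∈ Pψ, ψ uv :=
    (Finset.sum_subset hPsub hzero_out).symm
  have hLsubP : ∀ x ∈ L, x ∈ Pϕ := fun x hx => (hPϕmem x).mpr (hLpos x hx)
  have hsum_flow : ∑ uv ∈ Pϕ, walkFlow p₀ uv = (m : ℝ) := by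
    have eA : ∑ uv ∈ Pϕ, ((cnt uv L : ℕ) : ℝ) = ((L.length : ℕ) : ℝ) := by
      rw_mod_cast [sum_cnt_mem Pϕ L hLsubP]
    have eB : ∑ uv ∈ Pϕ, ((cnt (uv.2, uv.1) L : ℕ) : ℝ) = 0 := by
      apply Finset.sum_eq_zero
      intro uv huv
      have hnm : (uv.2, uv.1) ∉ L := by
        intro hc
        have hp := hLpos _ hc
        have h1 := (hPϕmem uv).mp huv
        have := hskew uv.1 uv.2
        simp only [Prod.mk.eta] at this
        linarith
      rw [cnt_eq_zero hnm]
      norm_num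
    calc ∑ uv ∈ Pϕ, walkFlow p₀ uv
        = ∑ uv ∈ Pϕ, (((cnt uv L : ℕ) : ℝ) - ((cnt (uv.2, uv.1) L : ℕ) : ℝ)) :=
          Finset.sum_congr rfl (fun uv _ => hflow uv)
      _ = ∑ uv ∈ Pϕ, ((cnt uv L : ℕ) : ℝ) - ∑ uv ∈ Pϕ, ((cnt (uv.2, uv.1) L : ℕ) : ℝ) :=
          Finset.sum_sub_distrib _ _
      _ = ((L.length : ℕ) : ℝ) - 0 := by rw [eA, eB]
      _ = (m : ℝ) := by rw [hLlen]; ring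
  have hkey : ∑ uv ∈ Pϕ, ϕ uv = lam * (m : ℝ) + ∑ uv ∈ Pψ, ψ uv := by
    have hdiff : ∑ uv ∈ Pϕ, ϕ uv - ∑ uv ∈ Pϕ, ψ uv = lam * (m : ℝ) := by
      rw [← Finset.sum_sub_distrib]
      have hc : ∀ uv ∈ Pϕ, ϕ uv - ψ uv = lam * walkFlow p₀ uv := by
        intro uv _; simp only [hψdef]; ring
      rw [Finset.sum_congr rfl hc, ← Finset.mul_sum, hsum_flow]
    rw [← hsum_eq]; linarith
  -- assemble
  let X : Fin (k + 1) → V := Fin.cons (f i) x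
  let P : ∀ jj : Fin (k + 1), Γ.Walk (X jj) (X jj) :=
    Fin.cons (α := fun jj => Γ.Walk (X jj) (X jj)) p₀ p
  refine ⟨k + 1, X, P, Fin.cons lam lam', ?_, ?_, ?_⟩
  · intro jj
    refine Fin.cases ?_ ?_ jj
    · simpa using le_of_lt hlam_pos
    · intro ii; simpa using hlam'0 ii
  · intro uv
    rw [Fin.sum_univ_succ]
    simp only [P, X, Fin.cons_zero, Fin.cons_succ]
    have := hrep uv
    simp only [hψdef] at this
    change ϕ uv = lam * walkFlow p₀ uv + ∑ ii : Fin k, lam' ii * walkFlow (p ii) uv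
    linarith
  · rw [Fin.sum_univ_succ]
    simp only [P, X, Fin.cons_zero, Fin.cons_succ]
    rw [hhalfϕ] at *
    have hψhalf : (1 / 2 : ℝ) * ∑ᶠ uv : V × V, |ψ uv| = ∑ uv ∈ Pψ, ψ uv := by
      rw [hhalfψ]; ring
    rw [hψhalf] at hnorm
    change 1 / 2 * (2 * ∑ uv ∈ Pϕ, ϕ uv) = lam * ((p₀.length : ℕ) : ℝ) + ∑ ii : Fin k, lam' ii * ((p ii).length : ℝ)
    rw [hp₀len]
    rw [← hnorm]
    have : (1 / 2 : ℝ) * (2 * ∑ uv ∈ Pϕ, ϕ uv) = ∑ uv ∈ Pϕ, ϕ uv := by ring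
    rw [this, hkey]

theorem cycle_decomposition_into_circuits {V : Type*} [DecidableEq V] (Γ : SimpleGraph V)
    (ϕ : V × V → ℝ) (hfin : (Function.support ϕ).Finite)
    (hadj : ∀ u v : V, ¬ Γ.Adj u v → ϕ (u, v) = 0)
    (hskew : ∀ u v : V, ϕ (v, u) = -ϕ (u, v))
    (hdiv : ∀ u : V, ∑ᶠ v : V, ϕ (u, v) = 0) :
    ∃ (k : ℕ) (x : Fin k → V) (p : ∀ i : Fin k, Γ.Walk (x i) (x i)) (lam : Fin k → ℝ),
      (∀ i : Fin k, 0 ≤ lam i) ∧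
      (∀ uv : V × V, ϕ uv = ∑ i : Fin k, lam i * walkFlow (p i) uv) ∧
      (1 / 2) * ∑ᶠ uv : V × V, |ϕ uv| = ∑ i : Fin k, lam i * ((p i).length : ℝ) :=
  key_cycle_decomp Γ _ ϕ rfl hfin hadj hskew hdiv
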